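/- For even integers m ≥ 2 and any n ≥ 0: sum over k from 0 to mn of (-1)^k · C(n,k;m)^2 = C(n, mn/2; m). -/

import Mathlib

open Polynomial Finset

/-- Polynomial (extended binomial) coefficient: the coefficient of `t^k` in
`(1 + t + ⋯ + t^m)^n`, defined to be `0` for negative `k`. -/
noncomputable def pc (m n : ℕ) (k : ℤ) : ℤ :=
  if 0 ≤ k then
    ((∑ i ∈ Finset.range (m + 1), (Polynomial.X : Polynomial ℤ) ^ i) ^ n).coeff k.toNat
  else 0

section aux

private noncomputable def P (m : ℕ) : Polynomial ℤ := ∑ i ∈ Finset.range (m + 1), X ^ i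

private lemma coeff_comp_neg (p : Polynomial ℤ) (k : ℕ) :
    (p.comp (-X)).coeff k = (-1) ^ k * p.coeff k := by
  induction p using Polynomial.induction_on' with
  | add p q hp hq => simp [add_comp, hp, hq]; ring
  | monomial n a =>
      have h1 : ((-1 : Polynomial ℤ)) ^ n = C ((-1 : ℤ) ^ n) := by
        rw [← C_1, ← C_neg, ← C_pow]
      rw [monomial_comp, neg_pow, h1, ← mul_assoc, ← C_mul, coeff_C_mul, coeff_X_pow,
        coeff_monomial]
      clear h1
      split_ifs <;> simp_all <;> ring

private lemma natDegree_P_le (m : ℕ) : (P m).natDegree ≤ m := by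
  apply Polynomial.natDegree_sum_le_of_forall_le
  intro i hi
  simpa using Nat.lt_succ_iff.mp (Finset.mem_range.mp hi)

private lemma reflect_P (m : ℕ) : (P m).reflect m = P m := by
  ext i
  rw [coeff_reflect]
  have hc : ∀ j, (P m).coeff j = if j ≤ m then 1 else 0 := by
    intro j
    simp [P, Polynomial.finset_sum_coeff, coeff_X_pow, Finset.sum_ite_eq, Nat.lt_succ_iff]
  by_cases h : i ≤ m
  · rw [revAt_le h, hc, hc, if_pos (Nat.sub_le _ _), if_pos h]
  · rw [revAt_eq_self_of_lt (Nat.lt_of_not_le h)]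

private lemma reflect_P_pow (m n : ℕ) : ((P m) ^ n).reflect (m * n) = (P m) ^ n := by
  induction n with
  | zero => simp
  | succ n ih =>
      have h1 : ((P m) ^ n).natDegree ≤ m * n := by
        calc ((P m) ^ n).natDegree ≤ n * (P m).natDegree := natDegree_pow_le
        _ ≤ n * m := Nat.mul_le_mul_left n (natDegree_P_le m)
        _ = m * n := Nat.mul_comm n m
      have : m * (n + 1) = m * n + m := by ring
      rw [pow_succ, this, reflect_mul _ _ h1 (natDegree_P_le m), ih, reflect_P]

private lemma coeff_symm (m n k : ℕ) (hk : k ≤ m * n) :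
    ((P m) ^ n).coeff (m * n - k) = ((P m) ^ n).coeff k := by
  conv_rhs => rw [← reflect_P_pow m n, coeff_reflect, revAt_le hk]

private lemma key_identity (m : ℕ) (hme : Even m) :
    (P m).comp (-X) * P m = Polynomial.expand ℤ 2 (P m) := by
  have hodd : Odd (m + 1) := Even.add_one hme
  have h1 : P m * (X - 1) = X ^ (m + 1) - 1 := geom_sum_mul X (m + 1)
  have h2 : (P m).comp (-X) * (-X - 1) = -X ^ (m + 1) - 1 := by
    have := geom_sum_mul (-X : Polynomial ℤ) (m + 1)
    rw [hodd.neg_pow] at this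
    rw [P]
    simpa [Polynomial.eval₂_finset_sum] using this
  have h3 : Polynomial.expand ℤ 2 (P m) * (X ^ 2 - 1) = X ^ (2 * (m + 1)) - 1 := by
    have := geom_sum_mul ((X : Polynomial ℤ) ^ 2) (m + 1)
    rw [← pow_mul] at this
    rw [P, map_sum]
    simpa [Polynomial.expand_X, ← pow_mul, mul_comm 2] using this
  have hne : ((X : Polynomial ℤ) ^ 2 - 1) ≠ 0 := by
    intro h
    have := congrArg (fun p => Polynomial.coeff p 0) h
    simp [coeff_X_pow] at this
  apply mul_right_cancel₀ hne
  rw [h3]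
  have : (X : Polynomial ℤ) ^ 2 - 1 = -((-X - 1) * (X - 1)) := by ring
  rw [this, mul_neg, ← mul_assoc, mul_assoc _ _ (-X - 1), mul_comm (P m) (-X - 1),
    ← mul_assoc, h2, mul_assoc, h1]
  ring_nf

end aux

theorem pc_alt_squares_even (m n : ℕ) (hm : 2 ≤ m) (hme : Even m) :
    ∑ k ∈ Finset.range (m * n + 1), (-1 : ℤ) ^ k * (pc m n k) ^ 2 =
      pc m n ((m * n / 2 : ℕ) : ℤ) := by
  have hdvd : 2 ∣ m * n := Dvd.dvd.mul_right hme.two_dvd n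
  have hpc : ∀ k : ℕ, pc m n (k : ℤ) = ((P m) ^ n).coeff k := by
    intro k
    simp [pc, P]
  have key : ((P m).comp (-X)) ^ n * (P m) ^ n = Polynomial.expand ℤ 2 ((P m) ^ n) := by
    rw [← mul_pow, key_identity m hme, map_pow]
  have hcoeff := congrArg (fun p => Polynomial.coeff p (m * n)) key
  simp only [Polynomial.coeff_expand (by norm_num : 0 < 2), if_pos hdvd,
    Polynomial.coeff_mul] at hcoeff
  rw [Finset.Nat.sum_antidiagonal_eq_sum_range_succ_mk] at hcoeff
  have hQn : ((P m).comp (-X)) ^ n = ((P m) ^ n).comp (-X) := by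
    rw [← pow_comp]
  calc ∑ k ∈ Finset.range (m * n + 1), (-1 : ℤ) ^ k * (pc m n k) ^ 2
      = ∑ k ∈ Finset.range (m * n + 1),
        (((P m).comp (-X)) ^ n).coeff k * ((P m) ^ n).coeff (m * n - k) := by
        apply Finset.sum_congr rfl
        intro k hk
        rw [hpc, hQn, coeff_comp_neg,
          coeff_symm m n k (Nat.lt_succ_iff.mp (Finset.mem_range.mp hk))]
        ring
    _ = ((P m) ^ n).coeff (m * n / 2) := hcoeff
    _ = pc m n ((m * n / 2 : ℕ) : ℤ) := (hpc _).symm
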